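/- Let Ω ⊆ ℝ^d be a nonempty closed convex set and f : ℝ^d → ℝ a convex function. Let x₁ ∈ Ω and for t = 1,…,T define x_{t+1} = Π_Ω(x_t − η g_t), where η > 0, Π_Ω denotes Euclidean projection onto Ω, and g_t is a random vector whose conditional expectation given all randomness before iteration t is a subgradient of f at x_t and which satisfies E[‖g_t‖²] ≤ G². Then, for x̂_T = (1/T)∑_{t=1}^T x_t and every x ∈ Ω, E[f(x̂_T) − f(x)] ≤ ‖x − x₁‖²/(2ηT) + ηG²/2. -/

import Mathlib

open MeasureTheory RealInnerProductSpace

section Helpers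

variable {α : Type*} {m m0 : MeasurableSpace α} {μ : Measure α}

/-- Conditional expectation commutes with continuous linear maps. -/
lemma my_condexp_clm {E F : Type*} [NormedAddCommGroup E] [NormedSpace ℝ E] [CompleteSpace E]
    [NormedAddCommGroup F] [NormedSpace ℝ F] [CompleteSpace F]
    [IsFiniteMeasure μ] (hm : m ≤ m0)
    (L : E →L[ℝ] F) {f : α → E} (hf : Integrable f μ) :
    (fun ω => L ((μ[f|m]) ω)) =ᵐ[μ] μ[fun ω => L (f ω)|m] := by
  haveI : SigmaFinite (μ.trim hm) := inferInstance
  refine ae_eq_condExp_of_forall_setIntegral_eq hm (L.integrable_comp hf)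
    (fun s _ _ => (L.integrable_comp integrable_condExp).integrableOn)
    (fun s hs hμs => ?_)
    ((L.continuous.comp_stronglyMeasurable stronglyMeasurable_condExp).aestronglyMeasurable)
  rw [L.integral_comp_comm integrable_condExp.integrableOn,
    setIntegral_condExp hm hf hs, ← L.integral_comp_comm hf.integrableOn]

/-- Product of two L² real functions is integrable. -/
lemma my_integrable_mul {φ ψ : α → ℝ} (hφ : MemLp φ 2 μ) (hψ : MemLp ψ 2 μ) :
    Integrable (fun ω => φ ω * ψ ω) μ := by
  have h : MemLp (φ • ψ) 1 μ := hψ.smul hφ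
  exact memLp_one_iff_integrable.mp h

lemma my_integrable_inner {d : ℕ} {g h : α → EuclideanSpace ℝ (Fin d)}
    (hg : MemLp g 2 μ) (hh : MemLp h 2 μ) :
    Integrable (fun ω => ⟪g ω, h ω⟫) μ := by
  have hnn : Integrable (fun ω => ‖g ω‖ * ‖h ω‖) μ := my_integrable_mul hg.norm hh.norm
  refine hnn.mono' (AEStronglyMeasurable.inner hg.1 hh.1) (Filter.Eventually.of_forall fun ω => ?_)
  exact norm_inner_le_norm _ _

/-- Pull-out property for the inner product with a measurable L² function. -/
lemma my_condexp_inner {d : ℕ} [IsFiniteMeasure μ] (hm : m ≤ m0)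
    {g h : α → EuclideanSpace ℝ (Fin d)}
    (hgi : Integrable g μ) (hg2 : MemLp g 2 μ)
    (hhm : StronglyMeasurable[m] h) (hh2 : MemLp h 2 μ) :
    (fun ω => ⟪(μ[g|m]) ω, h ω⟫) =ᵐ[μ] μ[fun ω => ⟪g ω, h ω⟫|m] := by
  have hco : ∀ (u : α → EuclideanSpace ℝ (Fin d)), MemLp u 2 μ → ∀ i : Fin d,
      MemLp (fun ω => u ω i) 2 μ := fun u hu i =>
    (EuclideanSpace.proj (𝕜 := ℝ) i).comp_memLp' hu
  have hint : ∀ i : Fin d, Integrable (fun ω => h ω i * g ω i) μ := fun i =>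
    my_integrable_mul (hco h hh2 i) (hco g hg2 i)
  have coord : ∀ i : Fin d,
      (fun ω => h ω i * (μ[g|m]) ω i) =ᵐ[μ] μ[fun ω => h ω i * g ω i|m] := by
    intro i
    have h1 : (fun ω => (μ[g|m]) ω i) =ᵐ[μ] μ[fun ω => g ω i|m] :=
      my_condexp_clm hm (EuclideanSpace.proj (𝕜 := ℝ) i) hgi
    have h2 : μ[fun ω => h ω i * g ω i|m]
        =ᵐ[μ] fun ω => h ω i * (μ[fun ω => g ω i|m]) ω :=
      condExp_mul_of_stronglyMeasurable_left
        ((EuclideanSpace.proj (𝕜 := ℝ) i).continuous.comp_stronglyMeasurable hhm)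
        (hint i) ((EuclideanSpace.proj (𝕜 := ℝ) i).integrable_comp hgi)
    filter_upwards [h1, h2] with ω e1 e2
    rw [e2, ← e1]
  have key : μ[fun ω => ⟪g ω, h ω⟫|m]
      =ᵐ[μ] fun ω => ∑ i : Fin d, (μ[fun ω' => h ω' i * g ω' i|m]) ω := by
    have : (fun ω => ⟪g ω, h ω⟫) = ∑ i : Fin d, fun ω => h ω i * g ω i := by
      funext ω
      simp [PiLp.inner_apply, RCLike.inner_apply, Finset.sum_apply, mul_comm]
    rw [this]
    have := condExp_finset_sum (μ := μ) (m := m)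
      (f := fun (i : Fin d) (ω : α) => h ω i * g ω i) (s := Finset.univ)
      (fun i _ => hint i)
    filter_upwards [this] with ω e
    rw [e]; simp [Finset.sum_apply]
  have coordall := Filter.eventually_all.mpr coord
  filter_upwards [key, coordall] with ω e1 e2
  rw [e1]
  simp only [PiLp.inner_apply, RCLike.inner_apply, RCLike.conj_to_real]
  exact Finset.sum_congr rfl fun i _ => e2 i

lemma my_proj_contract {d : ℕ} {Ω : Set (EuclideanSpace ℝ (Fin d))} (hconv : Convex ℝ Ω)
    {p y xr : EuclideanSpace ℝ (Fin d)} (hp : p ∈ Ω) (hxr : xr ∈ Ω)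
    (hmin : ∀ u ∈ Ω, ‖p - y‖ ≤ ‖u - y‖) : ‖p - xr‖ ≤ ‖y - xr‖ := by
  haveI : Nonempty ↑Ω := ⟨⟨p, hp⟩⟩
  have hinf : ‖y - p‖ = ⨅ w : Ω, ‖y - w‖ := by
    have hbdd : BddBelow (Set.range fun w : Ω => ‖y - (w : EuclideanSpace ℝ (Fin d))‖) := by
      refine ⟨0, ?_⟩; rintro _ ⟨w, rfl⟩; exact norm_nonneg _
    refine le_antisymm (le_ciInf fun w => ?_) (ciInf_le hbdd (⟨p, hp⟩ : Ω))
    rw [norm_sub_rev y p, norm_sub_rev y (w : EuclideanSpace ℝ (Fin d))]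
    exact hmin w w.2
  have hvar := (norm_eq_iInf_iff_real_inner_le_zero hconv hp).mp hinf xr hxr
  have hexp : ‖y - xr‖ ^ 2 = ‖y - p‖ ^ 2 + 2 * ⟪y - p, p - xr⟫ + ‖p - xr‖ ^ 2 := by
    rw [show y - xr = (y - p) + (p - xr) by abel, norm_add_sq_real]
  have hip : 0 ≤ ⟪y - p, p - xr⟫ := by
    have : ⟪y - p, p - xr⟫ = -⟪y - p, xr - p⟫ := by rw [← neg_sub xr p, inner_neg_right]
    linarith [this ▸ neg_nonneg.mpr hvar]
  nlinarith [norm_nonneg (p - xr), norm_nonneg (y - xr), sq_nonneg (‖y - p‖)]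

lemma my_step {d : ℕ} {Ω : Set (EuclideanSpace ℝ (Fin d))} (hconv : Convex ℝ Ω)
    {xt xt1 gt xr : EuclideanSpace ℝ (Fin d)} {η : ℝ} (hη : 0 < η)
    (hxr : xr ∈ Ω) (hmem : xt1 ∈ Ω)
    (hmin : ∀ u ∈ Ω, ‖xt1 - (xt - η • gt)‖ ≤ ‖u - (xt - η • gt)‖) :
    ⟪gt, xt - xr⟫ ≤ (‖xt - xr‖ ^ 2 - ‖xt1 - xr‖ ^ 2) / (2 * η) + η / 2 * ‖gt‖ ^ 2 := by
  have h1 : ‖xt1 - xr‖ ≤ ‖(xt - η • gt) - xr‖ := my_proj_contract hconv hmem hxr hmin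
  have h2 : ‖(xt - η • gt) - xr‖ ^ 2
      = ‖xt - xr‖ ^ 2 - 2 * η * ⟪gt, xt - xr⟫ + η ^ 2 * ‖gt‖ ^ 2 := by
    rw [show (xt - η • gt) - xr = (xt - xr) - η • gt by abel, norm_sub_sq_real,
      real_inner_smul_right, norm_smul, real_inner_comm]
    rw [mul_pow, Real.norm_eq_abs, sq_abs]
    ring
  have h3 : ‖xt1 - xr‖ ^ 2 ≤ ‖(xt - η • gt) - xr‖ ^ 2 :=
    pow_le_pow_left₀ (norm_nonneg _) h1 2
  have heq : (‖xt - xr‖ ^ 2 - ‖xt1 - xr‖ ^ 2) / (2 * η) + η / 2 * ‖gt‖ ^ 2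
      = (‖xt - xr‖ ^ 2 - ‖xt1 - xr‖ ^ 2 + η ^ 2 * ‖gt‖ ^ 2) / (2 * η) := by
    field_simp
  rw [heq, le_div_iff₀ (by positivity)]
  nlinarith [h2 ▸ h3]

end Helpers

theorem stmt_5 {d : ℕ} {Θ : Type*} [mΘ : MeasurableSpace Θ]
    (P : Measure Θ) [IsProbabilityMeasure P]
    (Ω : Set (EuclideanSpace ℝ (Fin d))) (hne : Ω.Nonempty) (hcl : IsClosed Ω)
    (hconv : Convex ℝ Ω)
    (f : EuclideanSpace ℝ (Fin d) → ℝ) (hf : ConvexOn ℝ Set.univ f)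
    (x₁ : EuclideanSpace ℝ (Fin d)) (hx₁mem : x₁ ∈ Ω)
    (η G : ℝ) (hη : 0 < η)
    (T : ℕ) (hT : 0 < T)
    (𝒢 : ℕ → MeasurableSpace Θ) (hle : ∀ t, 𝒢 t ≤ mΘ) (hmono : Monotone 𝒢)
    (x g : ℕ → Θ → EuclideanSpace ℝ (Fin d))
    (hx1 : ∀ ω, x 1 ω = x₁)
    (hadapt : ∀ t, StronglyMeasurable[𝒢 t] (x t))
    (hgint : ∀ t ∈ Finset.Icc 1 T, Integrable (g t) P)
    (hgsq : ∀ t ∈ Finset.Icc 1 T, Integrable (fun ω => ‖g t ω‖ ^ 2) P)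
    (hmom : ∀ t ∈ Finset.Icc 1 T, ∫ ω, ‖g t ω‖ ^ 2 ∂P ≤ G ^ 2)
    (hsub : ∀ t ∈ Finset.Icc 1 T, ∀ᵐ ω ∂P,
      ∀ y, f y ≥ f (x t ω) + ⟪(P[g t | 𝒢 t]) ω, y - x t ω⟫)
    (hproj : ∀ t ∈ Finset.Icc 1 T, ∀ ω,
      x (t + 1) ω ∈ Ω ∧ ∀ u ∈ Ω,
        ‖x (t + 1) ω - (x t ω - η • g t ω)‖ ≤ ‖u - (x t ω - η • g t ω)‖)
    (hint : Integrable (fun ω => f ((T : ℝ)⁻¹ • ∑ t ∈ Finset.Icc 1 T, x t ω)) P) :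
    ∀ xr ∈ Ω,
      ∫ ω, (f ((T : ℝ)⁻¹ • ∑ t ∈ Finset.Icc 1 T, x t ω) - f xr) ∂P
        ≤ ‖xr - x₁‖ ^ 2 / (2 * η * T) + η * G ^ 2 / 2 := by
  intro xr hxr
  have hTne : (T : ℝ) ≠ 0 := Nat.cast_ne_zero.mpr hT.ne'
  -- L² bounds for the gradients
  have hg2 : ∀ t ∈ Finset.Icc 1 T, MemLp (g t) 2 P := fun t ht =>
    (memLp_two_iff_integrable_sq_norm (hgint t ht).1).mpr (hgsq t ht)
  -- L² bounds for the iterates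
  have hx2 : ∀ t, 1 ≤ t → (t ≤ T + 1 → MemLp (fun ω => x t ω - xr) 2 P) := by
    refine Nat.le_induction ?_ ?_
    · intro _
      have he : (fun ω => x 1 ω - xr) = fun _ => x₁ - xr := funext fun ω => by rw [hx1]
      rw [he]; exact memLp_const _
    · intro t h1t IH ht1
      have htT : t ∈ Finset.Icc 1 T := Finset.mem_Icc.mpr ⟨h1t, by omega⟩
      have hmeas : AEStronglyMeasurable (fun ω => x (t + 1) ω - xr) P :=
        (((hadapt (t + 1)).mono (hle (t + 1))).sub stronglyMeasurable_const).aestronglyMeasurable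
      have hdom : MemLp (fun ω => ‖x t ω - xr‖ + η * ‖g t ω‖) 2 P :=
        (IH (by omega)).norm.add ((hg2 t htT).norm.const_mul η)
      refine hdom.of_le hmeas (Filter.Eventually.of_forall fun ω => ?_)
      have hm := hproj t htT ω
      have hcon : ‖x (t + 1) ω - xr‖ ≤ ‖(x t ω - η • g t ω) - xr‖ :=
        my_proj_contract hconv hm.1 hxr hm.2
      have htri : ‖(x t ω - η • g t ω) - xr‖ ≤ ‖x t ω - xr‖ + η * ‖g t ω‖ := by
        calc ‖(x t ω - η • g t ω) - xr‖ = ‖(x t ω - xr) + (-(η • g t ω))‖ := by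
              congr 1; abel
          _ ≤ ‖x t ω - xr‖ + ‖-(η • g t ω)‖ := norm_add_le _ _
          _ = ‖x t ω - xr‖ + η * ‖g t ω‖ := by
              rw [norm_neg, norm_smul, Real.norm_eq_abs, abs_of_pos hη]
      calc ‖x (t + 1) ω - xr‖ ≤ ‖x t ω - xr‖ + η * ‖g t ω‖ := hcon.trans htri
        _ ≤ ‖‖x t ω - xr‖ + η * ‖g t ω‖‖ := le_abs_self _
  have hxsq : ∀ t, 1 ≤ t → t ≤ T + 1 → Integrable (fun ω => ‖x t ω - xr‖ ^ 2) P :=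
    fun t h1 h2 =>
      (memLp_two_iff_integrable_sq_norm (hx2 t h1 h2).1).mp (hx2 t h1 h2)
  have hinner : ∀ t ∈ Finset.Icc 1 T, Integrable (fun ω => ⟪g t ω, x t ω - xr⟫) P :=
    fun t ht => my_integrable_inner (hg2 t ht)
      (hx2 t (Finset.mem_Icc.mp ht).1 (by have := (Finset.mem_Icc.mp ht).2; omega))
  -- the per-step bound in expectation
  set A : ℕ → ℝ := fun t => ∫ ω, ‖x t ω - xr‖ ^ 2 ∂P with hA
  have hIt : ∀ t ∈ Finset.Icc 1 T, ∫ ω, ⟪g t ω, x t ω - xr⟫ ∂P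
      ≤ (A t - A (t + 1)) / (2 * η) + η / 2 * G ^ 2 := by
    intro t ht
    obtain ⟨h1, h2⟩ := Finset.mem_Icc.mp ht
    have hxa := hxsq t h1 (by omega)
    have hxb := hxsq (t + 1) (by omega) (by omega)
    have hpt : ∀ ω, ⟪g t ω, x t ω - xr⟫
        ≤ (‖x t ω - xr‖ ^ 2 - ‖x (t + 1) ω - xr‖ ^ 2) / (2 * η) + η / 2 * ‖g t ω‖ ^ 2 :=
      fun ω => my_step hconv hη hxr (hproj t ht ω).1 (hproj t ht ω).2
    have hsint : Integrable (fun ω => ‖x t ω - xr‖ ^ 2 - ‖x (t + 1) ω - xr‖ ^ 2) P :=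
      hxa.sub hxb
    have hdint : Integrable (fun ω =>
        (‖x t ω - xr‖ ^ 2 - ‖x (t + 1) ω - xr‖ ^ 2) / (2 * η)) P := hsint.div_const _
    have hmint : Integrable (fun ω => η / 2 * ‖g t ω‖ ^ 2) P := (hgsq t ht).const_mul _
    have hRint : Integrable (fun ω =>
        (‖x t ω - xr‖ ^ 2 - ‖x (t + 1) ω - xr‖ ^ 2) / (2 * η) + η / 2 * ‖g t ω‖ ^ 2) P :=
      hdint.add hmint
    calc ∫ ω, ⟪g t ω, x t ω - xr⟫ ∂P
        ≤ ∫ ω, ((‖x t ω - xr‖ ^ 2 - ‖x (t + 1) ω - xr‖ ^ 2) / (2 * η)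
            + η / 2 * ‖g t ω‖ ^ 2) ∂P := integral_mono (hinner t ht) hRint fun ω => hpt ω
      _ = (A t - A (t + 1)) / (2 * η) + η / 2 * ∫ ω, ‖g t ω‖ ^ 2 ∂P := by
          rw [integral_add hdint hmint, integral_div, integral_sub hxa hxb,
            integral_const_mul]
      _ ≤ (A t - A (t + 1)) / (2 * η) + η / 2 * G ^ 2 := by
          have := hmom t ht
          have hη2 : (0:ℝ) ≤ η / 2 := by positivity
          nlinarith [mul_le_mul_of_nonneg_left this hη2]
  -- telescoping sum
  have htel : ∑ t ∈ Finset.Icc 1 T, (A t - A (t + 1)) = A 1 - A (T + 1) := by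
    rw [← Finset.Ico_add_one_right_eq_Icc, Finset.sum_Ico_eq_sum_range, Nat.add_sub_cancel]
    have hc : ∀ i ∈ Finset.range T, A (1 + i) - A (1 + i + 1)
        = A (i + 1) - A (i + 1 + 1) := by
      intro i _; rw [Nat.add_comm 1 i]
    rw [Finset.sum_congr rfl hc, Finset.sum_range_sub' (fun i => A (i + 1)) T]
  have hA1 : A 1 = ‖xr - x₁‖ ^ 2 := by
    rw [hA]
    simp only [hx1]
    rw [integral_const]
    simp [norm_sub_rev]
  have hAT : 0 ≤ A (T + 1) := integral_nonneg fun ω => by positivity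
  have hsumG : ∑ t ∈ Finset.Icc 1 T, ∫ ω, ⟪g t ω, x t ω - xr⟫ ∂P
      ≤ ‖xr - x₁‖ ^ 2 / (2 * η) + T * (η / 2 * G ^ 2) := by
    calc ∑ t ∈ Finset.Icc 1 T, ∫ ω, ⟪g t ω, x t ω - xr⟫ ∂P
        ≤ ∑ t ∈ Finset.Icc 1 T, ((A t - A (t + 1)) / (2 * η) + η / 2 * G ^ 2) :=
          Finset.sum_le_sum hIt
      _ = (A 1 - A (T + 1)) / (2 * η) + T * (η / 2 * G ^ 2) := by
          rw [Finset.sum_add_distrib, ← Finset.sum_div, htel, Finset.sum_const,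
            Nat.card_Icc, Nat.add_sub_cancel, nsmul_eq_mul]
      _ ≤ ‖xr - x₁‖ ^ 2 / (2 * η) + T * (η / 2 * G ^ 2) := by
          have : (A 1 - A (T + 1)) / (2 * η) ≤ ‖xr - x₁‖ ^ 2 / (2 * η) := by
            apply div_le_div_of_nonneg_right ?_ (by positivity)
            · linarith [hA1, hAT]
          linarith
  -- tower property
  have hEq : ∀ t ∈ Finset.Icc 1 T,
      (∫ ω, ⟪(P[g t | 𝒢 t]) ω, x t ω - xr⟫ ∂P) = ∫ ω, ⟪g t ω, x t ω - xr⟫ ∂P := by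
    intro t ht
    have hae := my_condexp_inner (hle t) (hgint t ht) (hg2 t ht)
      ((hadapt t).sub stronglyMeasurable_const)
      (hx2 t (Finset.mem_Icc.mp ht).1 (by have := (Finset.mem_Icc.mp ht).2; omega))
    exact (integral_congr_ae hae).trans (integral_condExp (hle t))
  have hVint : ∀ t ∈ Finset.Icc 1 T,
      Integrable (fun ω => ⟪(P[g t | 𝒢 t]) ω, x t ω - xr⟫) P := by
    intro t ht
    have hae := my_condexp_inner (hle t) (hgint t ht) (hg2 t ht)
      ((hadapt t).sub stronglyMeasurable_const)
      (hx2 t (Finset.mem_Icc.mp ht).1 (by have := (Finset.mem_Icc.mp ht).2; omega))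
    exact integrable_condExp.congr hae.symm
  -- pointwise a.e. inequality
  have hsub' : ∀ᵐ ω ∂P, ∀ t ∈ Finset.Icc 1 T,
      ∀ y, f y ≥ f (x t ω) + ⟪(P[g t | 𝒢 t]) ω, y - x t ω⟫ := by
    rw [Filter.eventually_all_finset]
    exact fun t ht => hsub t ht
  have hae2 : ∀ᵐ ω ∂P, f ((T : ℝ)⁻¹ • ∑ t ∈ Finset.Icc 1 T, x t ω) - f xr
      ≤ (T : ℝ)⁻¹ * ∑ t ∈ Finset.Icc 1 T, ⟪(P[g t | 𝒢 t]) ω, x t ω - xr⟫ := by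
    filter_upwards [hsub'] with ω hω
    have hw : ∑ _t ∈ Finset.Icc 1 T, (T : ℝ)⁻¹ = 1 := by
      rw [Finset.sum_const, Nat.card_Icc, Nat.add_sub_cancel, nsmul_eq_mul]
      field_simp
    have hJ : f ((T : ℝ)⁻¹ • ∑ t ∈ Finset.Icc 1 T, x t ω)
        ≤ ∑ t ∈ Finset.Icc 1 T, (T : ℝ)⁻¹ * f (x t ω) := by
      have hj := hf.map_sum_le (fun i _ => by positivity) hw (fun i _ => Set.mem_univ (x i ω))
      rw [← Finset.smul_sum] at hj
      simpa only [smul_eq_mul] using hj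
    have hper : ∀ t ∈ Finset.Icc 1 T,
        f (x t ω) - f xr ≤ ⟪(P[g t | 𝒢 t]) ω, x t ω - xr⟫ := by
      intro t ht
      have := hω t ht xr
      have hn : ⟪(P[g t | 𝒢 t]) ω, xr - x t ω⟫
          = -⟪(P[g t | 𝒢 t]) ω, x t ω - xr⟫ := by
        rw [← neg_sub (x t ω) xr, inner_neg_right]
      linarith [hn ▸ this]
    have hsum2 : ∑ t ∈ Finset.Icc 1 T, (f (x t ω) - f xr)
        ≤ ∑ t ∈ Finset.Icc 1 T, ⟪(P[g t | 𝒢 t]) ω, x t ω - xr⟫ :=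
      Finset.sum_le_sum hper
    have hre : ∑ t ∈ Finset.Icc 1 T, (T : ℝ)⁻¹ * f (x t ω) - f xr
        = (T : ℝ)⁻¹ * ∑ t ∈ Finset.Icc 1 T, (f (x t ω) - f xr) := by
      rw [Finset.mul_sum]
      rw [show ∀ S : Finset ℕ, ∑ t ∈ S, (T:ℝ)⁻¹ * (f (x t ω) - f xr)
        = ∑ t ∈ S, ((T:ℝ)⁻¹ * f (x t ω) - (T:ℝ)⁻¹ * f xr) from fun S =>
          Finset.sum_congr rfl fun t _ => by ring]
      rw [Finset.sum_sub_distrib, Finset.sum_const, Nat.card_Icc, Nat.add_sub_cancel,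
        nsmul_eq_mul]
      have : (T : ℝ) * ((T : ℝ)⁻¹ * f xr) = f xr := by field_simp
      linarith [this]
    have hTinv : (0:ℝ) ≤ (T : ℝ)⁻¹ := by positivity
    calc f ((T : ℝ)⁻¹ • ∑ t ∈ Finset.Icc 1 T, x t ω) - f xr
        ≤ ∑ t ∈ Finset.Icc 1 T, (T : ℝ)⁻¹ * f (x t ω) - f xr := by linarith
      _ = (T : ℝ)⁻¹ * ∑ t ∈ Finset.Icc 1 T, (f (x t ω) - f xr) := hre
      _ ≤ (T : ℝ)⁻¹ * ∑ t ∈ Finset.Icc 1 T, ⟪(P[g t | 𝒢 t]) ω, x t ω - xr⟫ :=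
          mul_le_mul_of_nonneg_left hsum2 hTinv
  -- put everything together
  have hL : Integrable (fun ω => f ((T : ℝ)⁻¹ • ∑ t ∈ Finset.Icc 1 T, x t ω) - f xr) P :=
    hint.sub (integrable_const _)
  have hR : Integrable (fun ω =>
      (T : ℝ)⁻¹ * ∑ t ∈ Finset.Icc 1 T, ⟪(P[g t | 𝒢 t]) ω, x t ω - xr⟫) P :=
    (integrable_finset_sum _ (fun t ht => hVint t ht)).const_mul _
  have hkey := integral_mono_ae hL hR hae2
  have hRval : ∫ ω, ((T : ℝ)⁻¹ * ∑ t ∈ Finset.Icc 1 T, ⟪(P[g t | 𝒢 t]) ω, x t ω - xr⟫) ∂P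
      = (T : ℝ)⁻¹ * ∑ t ∈ Finset.Icc 1 T, ∫ ω, ⟪g t ω, x t ω - xr⟫ ∂P := by
    rw [integral_const_mul, integral_finset_sum _ (fun t ht => hVint t ht)]
    congr 1
    exact Finset.sum_congr rfl hEq
  have hfinal : (T : ℝ)⁻¹ * (‖xr - x₁‖ ^ 2 / (2 * η) + T * (η / 2 * G ^ 2))
      = ‖xr - x₁‖ ^ 2 / (2 * η * T) + η * G ^ 2 / 2 := by
    field_simp
  calc ∫ ω, (f ((T : ℝ)⁻¹ • ∑ t ∈ Finset.Icc 1 T, x t ω) - f xr) ∂P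
      ≤ ∫ ω, ((T : ℝ)⁻¹ * ∑ t ∈ Finset.Icc 1 T, ⟪(P[g t | 𝒢 t]) ω, x t ω - xr⟫) ∂P := hkey
    _ = (T : ℝ)⁻¹ * ∑ t ∈ Finset.Icc 1 T, ∫ ω, ⟪g t ω, x t ω - xr⟫ ∂P := hRval
    _ ≤ (T : ℝ)⁻¹ * (‖xr - x₁‖ ^ 2 / (2 * η) + T * (η / 2 * G ^ 2)) :=
        mul_le_mul_of_nonneg_left hsumG (by positivity)
    _ = ‖xr - x₁‖ ^ 2 / (2 * η * T) + η * G ^ 2 / 2 := hfinal
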